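/- Let G be a finite simple graph on n vertices. Then the sequences {sdepth(S/J(G)^(k))}_{k=1}^∞ and {sdepth(J(G)^(k))}_{k=1}^∞ are convergent (being non-increasing sequences of non-negative integers, they are eventually constant). -/

import Mathlib

open MvPolynomial

/-- The `k`-th symbolic power of the cover ideal of a graph `G`:
`J(G)^(k) = ⋂_{{x,y} ∈ E(G)} (x,y)^k`. -/
noncomputable def coverIdealSymbPow (K : Type*) [Field K] {V : Type*}
    (G : SimpleGraph V) (k : ℕ) : Ideal (MvPolynomial V K) :=
  ⨅ e : {p : V × V // G.Adj p.1 p.2}, (Ideal.span {X e.val.1, X e.val.2}) ^ k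

/-- The "Stanley set" of monomials `u·K[Z]`, recorded by exponent vectors:
all exponent vectors of the form `u + w` with `w` supported in `Z`. -/
def stanleyPiece {σ : Type*} (u : σ →₀ ℕ) (Z : Finset σ) : Set (σ →₀ ℕ) :=
  {v | u ≤ v ∧ ∀ i ∉ Z, v i = u i}

/-- A Stanley decomposition of a set of monomials (recorded by their exponent
vectors): a partition into finitely many Stanley sets `u_i·K[Z_i]`. -/
structure StanleyDecomp {σ : Type*} (A : Set (σ →₀ ℕ)) where
  m : ℕ
  u : Fin m → (σ →₀ ℕ)
  Z : Fin m → Finset σ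
  cover : A = ⋃ i, stanleyPiece (u i) (Z i)
  disj : ∀ i j, i ≠ j → Disjoint (stanleyPiece (u i) (Z i)) (stanleyPiece (u j) (Z j))

/-- Stanley depth of a set of monomials: the maximum over all Stanley
decompositions of the minimum `|Z_i|` (with value `⊤` on the empty set,
corresponding to the convention `sdepth 0 = ∞`). -/
noncomputable def sdepthSet {σ : Type*} (A : Set (σ →₀ ℕ)) : ℕ∞ :=
  ⨆ D : StanleyDecomp A, ⨅ i, ((D.Z i).card : ℕ∞)

/-- The set of (exponent vectors of) monomials belonging to an ideal. -/
def monomialSet {σ K : Type*} [CommSemiring K] (I : Ideal (MvPolynomial σ K)) :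
    Set (σ →₀ ℕ) :=
  {v | MvPolynomial.monomial v (1 : K) ∈ I}

/-- Stanley depth of a monomial ideal `I ⊆ S = K[x_1,…,x_n]`. -/
noncomputable def sdepthIdeal {σ K : Type*} [CommSemiring K]
    (I : Ideal (MvPolynomial σ K)) : ℕ∞ :=
  sdepthSet (monomialSet I)

/-- Stanley depth of the quotient `S/I` of the polynomial ring by a monomial ideal. -/
noncomputable def sdepthQuot {σ K : Type*} [CommSemiring K]
    (I : Ideal (MvPolynomial σ K)) : ℕ∞ :=
  sdepthSet (monomialSet I)ᶜ


/-! ### Auxiliary material -/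

/-- The ideal of polynomials all of whose monomials `v` satisfy `k ≤ v i + v j`. -/
def degBddIdeal (K : Type*) [CommSemiring K] {σ : Type*} (i j : σ) (k : ℕ) :
    Ideal (MvPolynomial σ K) where
  carrier := {f | ∀ v ∈ f.support, k ≤ v i + v j}
  zero_mem' := by intro v hv; simp at hv
  add_mem' := by
    classical
    intro f g hf hg v hv
    rcases Finset.mem_union.mp (MvPolynomial.support_add hv) with h | h
    · exact hf v h
    · exact hg v h
  smul_mem' := by
    classical
    intro c f hf v hv
    rw [smul_eq_mul] at hv
    obtain ⟨a, ha, b, hb, rfl⟩ := Finset.mem_add.mp (MvPolynomial.support_mul _ _ hv)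
    have := hf b hb
    simp only [Finsupp.add_apply]
    omega

lemma degBdd_mul_le (K : Type*) [CommSemiring K] {σ : Type*} (i j : σ) (a b : ℕ) :
    degBddIdeal K i j a * degBddIdeal K i j b ≤ degBddIdeal K i j (a + b) := by
  classical
  rw [Ideal.mul_le]
  intro f hf g hg v hv
  obtain ⟨p, hp, q, hq, rfl⟩ := Finset.mem_add.mp (MvPolynomial.support_mul _ _ hv)
  have h1 := hf p hp
  have h2 := hg q hq
  simp only [Finsupp.add_apply]
  omega

lemma monomial_mem_span_pow {K : Type*} [Field K] {σ : Type*} {i j : σ} (hij : i ≠ j)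
    (w : σ →₀ ℕ) (k : ℕ) :
    (monomial w (1 : K) ∈ (Ideal.span {X i, X j} : Ideal (MvPolynomial σ K)) ^ k ↔
      k ≤ w i + w j) := by
  classical
  constructor
  · intro h
    have hpow : ∀ m : ℕ, (Ideal.span {X i, X j} : Ideal (MvPolynomial σ K)) ^ m ≤
        degBddIdeal K i j m := by
      intro m
      induction m with
      | zero => intro f _ v _; omega
      | succ m ih =>
        have hbase : (Ideal.span {X i, X j} : Ideal (MvPolynomial σ K)) ≤
            degBddIdeal K i j 1 := by
          rw [Ideal.span_le]
          intro f hf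
          rcases hf with rfl | rfl
          · intro v hv
            rw [MvPolynomial.support_X] at hv
            simp at hv; subst hv; simp
          · intro v hv
            rw [MvPolynomial.support_X] at hv
            simp at hv; subst hv; simp
        calc (Ideal.span {X i, X j} : Ideal (MvPolynomial σ K)) ^ (m + 1)
            = Ideal.span {X i, X j} ^ m * Ideal.span {X i, X j} := by rw [pow_succ]
          _ ≤ degBddIdeal K i j m * degBddIdeal K i j 1 := Ideal.mul_mono (ih) hbase
          _ ≤ degBddIdeal K i j (m + 1) := degBdd_mul_le K i j m 1
    have hw := hpow k h w
    apply hw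
    rw [MvPolynomial.support_monomial]
    simp
  · intro h
    set I : Ideal (MvPolynomial σ K) := Ideal.span {X i, X j} with hI
    have hXi : (X i : MvPolynomial σ K) ∈ I := Ideal.subset_span (by simp)
    have hXj : (X j : MvPolynomial σ K) ∈ I := Ideal.subset_span (by simp)
    have hm : (X i : MvPolynomial σ K) ^ (w i) * X j ^ (w j) ∈ I ^ (w i + w j) := by
      rw [pow_add]
      exact Ideal.mul_mem_mul (Ideal.pow_mem_pow hXi _) (Ideal.pow_mem_pow hXj _)
    have hle : I ^ (w i + w j) ≤ I ^ k := Ideal.pow_le_pow_right h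
    have key : monomial w (1 : K) =
        monomial (w - Finsupp.single i (w i) - Finsupp.single j (w j)) 1 *
          (X i ^ (w i) * X j ^ (w j)) := by
      have harg : w - Finsupp.single i (w i) - Finsupp.single j (w j) +
          (Finsupp.single i (w i) + Finsupp.single j (w j)) = w := by
        apply Finsupp.ext
        intro s
        simp only [Finsupp.add_apply, Finsupp.tsub_apply, Finsupp.single_apply]
        rcases eq_or_ne i s with rfl | hi
        · rw [if_pos rfl, if_neg (fun h : j = i => hij h.symm)]
          omega
        · rcases eq_or_ne j s with rfl | hj
          · rw [if_neg hi, if_pos rfl]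
            omega
          · rw [if_neg hi, if_neg hj]
            omega
      rw [X_pow_eq_monomial, X_pow_eq_monomial, monomial_mul, monomial_mul, harg,
        one_mul, one_mul]
    rw [key]
    exact Ideal.mul_mem_left _ _ (hle hm)

lemma monomialSet_coverIdealSymbPow (K : Type*) [Field K] {V : Type*}
    (G : SimpleGraph V) (k : ℕ) :
    monomialSet (coverIdealSymbPow K G k) =
      {w : V →₀ ℕ | ∀ p : V × V, G.Adj p.1 p.2 → k ≤ w p.1 + w p.2} := by
  ext w
  simp only [monomialSet, coverIdealSymbPow, Set.mem_setOf_eq, Ideal.mem_iInf]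
  constructor
  · intro h p hp
    exact (monomial_mem_span_pow (G.ne_of_adj hp) w k).mp (h ⟨p, hp⟩)
  · intro h e
    exact (monomial_mem_span_pow (G.ne_of_adj e.2) w k).mpr (h e.1 e.2)

/-- Pointwise ceiling of `(u - v)/2`. -/
noncomputable def ceilHalfSub {σ : Type*} (u v : σ →₀ ℕ) : σ →₀ ℕ :=
  Finsupp.onFinset u.support (fun s => (u s - v s + 1) / 2)
    (fun s h => Finsupp.mem_support_iff.mpr
      (fun h0 => h (show (u s - v s + 1) / 2 = 0 by rw [h0]; omega)))

lemma ceilHalfSub_apply {σ : Type*} (u v : σ →₀ ℕ) (s : σ) :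
    ceilHalfSub u v s = (u s - v s + 1) / 2 := rfl

lemma preimage_stanleyPiece_good {σ : Type*} {v u : σ →₀ ℕ} {Z : Finset σ}
    (hgood : ∀ s ∉ Z, v s ≤ u s ∧ 2 ∣ (u s - v s)) :
    (fun w : σ →₀ ℕ => 2 • w + v) ⁻¹' stanleyPiece u Z =
      stanleyPiece (ceilHalfSub u v) Z := by
  ext w
  simp only [Set.mem_preimage, stanleyPiece, Set.mem_setOf_eq, Finsupp.le_def,
    Finsupp.add_apply, Finsupp.smul_apply, smul_eq_mul, ceilHalfSub_apply]
  constructor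
  · rintro ⟨h1, h2⟩
    refine ⟨fun s => ?_, fun s hs => ?_⟩
    · have := h1 s; omega
    · have := h2 s hs; have := hgood s hs; omega
  · rintro ⟨h1, h2⟩
    refine ⟨fun s => ?_, fun s hs => ?_⟩
    · have := h1 s; omega
    · have := h2 s hs; have := hgood s hs; omega

lemma preimage_stanleyPiece_bad {σ : Type*} {v u : σ →₀ ℕ} {Z : Finset σ}
    (hbad : ¬ ∀ s ∉ Z, v s ≤ u s ∧ 2 ∣ (u s - v s)) :
    (fun w : σ →₀ ℕ => 2 • w + v) ⁻¹' stanleyPiece u Z = ∅ := by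
  ext w
  simp only [Set.mem_preimage, stanleyPiece, Set.mem_setOf_eq, Finsupp.le_def,
    Finsupp.add_apply, Finsupp.smul_apply, smul_eq_mul, Set.mem_empty_iff_false,
    iff_false, not_and]
  intro h1 h2
  push_neg at hbad
  obtain ⟨s, hs, hb⟩ := hbad
  have e1 := h2 s hs
  have e2 := h1 s
  omega

/-- The key lemma: Stanley depth does not decrease when passing to the preimage
of a set of exponent vectors under an affine map `w ↦ 2w + v`. -/
lemma sdepthSet_le_preimage {σ : Type*} (A : Set (σ →₀ ℕ)) (v : σ →₀ ℕ) :
    sdepthSet A ≤ sdepthSet ((fun w : σ →₀ ℕ => 2 • w + v) ⁻¹' A) := by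
  classical
  refine iSup_le fun D => ?_
  set good : Finset (Fin D.m) :=
    Finset.univ.filter (fun i => ∀ s ∉ D.Z i, v s ≤ D.u i s ∧ 2 ∣ (D.u i s - v s))
    with hgoodset
  have hmemgood : ∀ i : Fin D.m, i ∈ good ↔
      ∀ s ∉ D.Z i, v s ≤ D.u i s ∧ 2 ∣ (D.u i s - v s) := by
    intro i; simp [hgoodset]
  let e : {x // x ∈ good} ≃ Fin good.card := good.equivFin
  have hne : ∀ a b : Fin good.card, a ≠ b →
      ((e.symm a : Fin D.m) ≠ (e.symm b : Fin D.m)) := by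
    intro a b hab h
    exact hab (by
      have := Subtype.ext (p := fun x => x ∈ good) h
      exact e.symm.injective this)
  let D' : StanleyDecomp ((fun w : σ →₀ ℕ => 2 • w + v) ⁻¹' A) :=
    { m := good.card
      u := fun a => ceilHalfSub (D.u (e.symm a)) v
      Z := fun a => D.Z (e.symm a)
      cover := by
        have hc : ∀ x : σ →₀ ℕ, x ∈ A ↔ ∃ i, x ∈ stanleyPiece (D.u i) (D.Z i) := by
          intro x
          conv_lhs => rw [D.cover]
          simp [Set.mem_iUnion]
        ext w
        simp only [Set.mem_preimage, Set.mem_iUnion]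
        rw [hc]
        constructor
        · rintro ⟨i, hi⟩
          have hi' : w ∈ (fun w : σ →₀ ℕ => 2 • w + v) ⁻¹'
              stanleyPiece (D.u i) (D.Z i) := hi
          by_cases hg : ∀ s ∉ D.Z i, v s ≤ D.u i s ∧ 2 ∣ (D.u i s - v s)
          · rw [preimage_stanleyPiece_good hg] at hi'
            refine ⟨e ⟨i, (hmemgood i).mpr hg⟩, ?_⟩
            simpa [Equiv.symm_apply_apply] using hi'
          · rw [preimage_stanleyPiece_bad hg] at hi'
            exact absurd hi' (Set.notMem_empty _)
        · rintro ⟨a, ha⟩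
          refine ⟨e.symm a, ?_⟩
          have hw : w ∈ (fun w : σ →₀ ℕ => 2 • w + v) ⁻¹'
              stanleyPiece (D.u (e.symm a)) (D.Z (e.symm a)) := by
            rw [preimage_stanleyPiece_good ((hmemgood _).mp (e.symm a).2)]
            exact ha
          exact hw
      disj := by
        intro a b hab
        rw [← preimage_stanleyPiece_good ((hmemgood _).mp (e.symm a).2),
          ← preimage_stanleyPiece_good ((hmemgood _).mp (e.symm b).2)]
        exact Disjoint.preimage _ (D.disj _ _ (hne a b hab)) }
  calc ⨅ i, ((D.Z i).card : ℕ∞)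
      ≤ ⨅ a : Fin good.card, ((D.Z (e.symm a)).card : ℕ∞) :=
        le_iInf fun a => iInf_le _ _
    _ ≤ sdepthSet ((fun w : σ →₀ ℕ => 2 • w + v) ⁻¹' A) := le_iSup
        (fun D'' : StanleyDecomp ((fun w : σ →₀ ℕ => 2 • w + v) ⁻¹' A) =>
          ⨅ i, ((D''.Z i).card : ℕ∞)) D'

lemma preimage_adjSet {n : ℕ} (G : SimpleGraph (Fin n)) {k Kk t : ℕ}
    (hkK : 2 * k ≤ Kk) (ht : t = (Kk - 2 * k + 1) / 2) :
    (fun w : Fin n →₀ ℕ =>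
        2 • w + Finsupp.equivFunOnFinite.symm (fun _ : Fin n => t)) ⁻¹'
        {w : Fin n →₀ ℕ | ∀ p : Fin n × Fin n, G.Adj p.1 p.2 → Kk ≤ w p.1 + w p.2} =
      {w : Fin n →₀ ℕ | ∀ p : Fin n × Fin n, G.Adj p.1 p.2 → k ≤ w p.1 + w p.2} := by
  have hv : ∀ s : Fin n, (Finsupp.equivFunOnFinite.symm (fun _ : Fin n => t)) s = t :=
    fun s => rfl
  ext w
  simp only [Set.mem_preimage, Set.mem_setOf_eq, Finsupp.add_apply, Finsupp.smul_apply,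
    smul_eq_mul, hv]
  refine forall_congr' fun p => imp_congr_right fun _ => ?_
  omega

lemma eventually_const_of_halving {F : ℕ → ℕ∞}
    (h : ∀ k K : ℕ, 1 ≤ k → 2 * k ≤ K → F K ≤ F k) :
    ∃ N : ℕ, 1 ≤ N ∧ ∀ k : ℕ, N ≤ k → F k = F N := by
  have hwf : ∃ a ∈ Set.range (fun m : ℕ => F (2 ^ (m + 1))),
      ∀ x ∈ Set.range (fun m : ℕ => F (2 ^ (m + 1))), ¬ x < a :=
    wellFounded_lt.has_min _ ⟨_, ⟨0, rfl⟩⟩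
  obtain ⟨a, ⟨M, rfl⟩, hmin⟩ := hwf
  have hpow : ∀ m : ℕ, 1 ≤ 2 ^ m := fun m => Nat.one_le_two_pow
  have key : ∀ k : ℕ, 2 ^ (M + 2) ≤ k → F k = F (2 ^ (M + 1)) := by
    intro k hk
    have h1 : F k ≤ F (2 ^ (M + 1)) := by
      apply h _ _ (hpow _)
      calc 2 * 2 ^ (M + 1) = 2 ^ (M + 2) := by ring
        _ ≤ k := hk
    have h2 : F (2 ^ (k + 1)) ≤ F k := by
      apply h _ _ (le_trans (hpow _) hk)
      have : k < 2 ^ k := Nat.lt_two_pow_self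
      calc 2 * k ≤ 2 * 2 ^ k := by omega
        _ = 2 ^ (k + 1) := by ring
    have h3 : F (2 ^ (M + 1)) ≤ F (2 ^ (k + 1)) :=
      not_lt.mp (hmin _ ⟨k, rfl⟩)
    exact le_antisymm h1 (le_trans h3 h2)
  refine ⟨2 ^ (M + 2), hpow _, fun k hk => ?_⟩
  rw [key k hk, key _ le_rfl]

/-- For a finite simple graph `G` on `n` vertices, the sequences
`{sdepth(S/J(G)^(k))}_{k≥1}` and `{sdepth(J(G)^(k))}_{k≥1}` are convergent,
i.e. eventually constant. -/
theorem sdepth_symbPow_eventually_constant (K : Type*) [Field K] (n : ℕ)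
    (G : SimpleGraph (Fin n)) :
    (∃ N : ℕ, 1 ≤ N ∧ ∀ k : ℕ, N ≤ k →
      sdepthQuot (coverIdealSymbPow K G k) = sdepthQuot (coverIdealSymbPow K G N)) ∧
    (∃ N : ℕ, 1 ≤ N ∧ ∀ k : ℕ, N ≤ k →
      sdepthIdeal (coverIdealSymbPow K G k) = sdepthIdeal (coverIdealSymbPow K G N)) := by
  constructor
  · apply eventually_const_of_halving
    intro k Kk _ hkK
    unfold sdepthQuot
    rw [monomialSet_coverIdealSymbPow, monomialSet_coverIdealSymbPow]
    have := sdepthSet_le_preimage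
      ({w : Fin n →₀ ℕ | ∀ p : Fin n × Fin n, G.Adj p.1 p.2 → Kk ≤ w p.1 + w p.2}ᶜ)
      (Finsupp.equivFunOnFinite.symm (fun _ : Fin n => (Kk - 2 * k + 1) / 2))
    rwa [Set.preimage_compl, preimage_adjSet G hkK rfl] at this
  · apply eventually_const_of_halving
    intro k Kk _ hkK
    unfold sdepthIdeal
    rw [monomialSet_coverIdealSymbPow, monomialSet_coverIdealSymbPow]
    have := sdepthSet_le_preimage
      ({w : Fin n →₀ ℕ | ∀ p : Fin n × Fin n, G.Adj p.1 p.2 → Kk ≤ w p.1 + w p.2})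
      (Finsupp.equivFunOnFinite.symm (fun _ : Fin n => (Kk - 2 * k + 1) / 2))
    rwa [preimage_adjSet G hkK rfl] at this
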